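/- Let Δ be an ∨-decomposable NNF and γ be a set of states containing at most one state per variable. Then the formula ∀γ·Δ (the result of universally quantifying every state in γ from Δ) is equivalent to the NNF obtained from Δ as follows: for each state x_i ∈ γ, replace every occurrence of the literal ¬x_i by ⊥, every occurrence of x_j for j ≠ i by ⊥, and every occurrence of ¬x_j for j ≠ i by x_i. Moreover this replacement preserves ∨-decomposability. -/

import Mathlib

/-- A discrete formula over variables `V`, where variable `v` has states `σ v`. -/
inductive DForm (V : Type) (σ : V → Type) : Type where
  | top : DForm V σ
  | bot : DForm V σ
  | state : (v : V) → σ v → DForm V σ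
  | neg : DForm V σ → DForm V σ
  | conj : DForm V σ → DForm V σ → DForm V σ
  | disj : DForm V σ → DForm V σ → DForm V σ

namespace DForm

variable {V : Type} {σ : V → Type}

/-- Evaluation of a discrete formula in a world `w`. -/
def eval [∀ v, DecidableEq (σ v)] (w : ∀ v, σ v) : DForm V σ → Bool
  | top => true
  | bot => false
  | state v s => decide (w v = s)
  | neg φ => !(φ.eval w)
  | conj φ ψ => φ.eval w && ψ.eval w
  | disj φ ψ => φ.eval w || ψ.eval w

/-- Two formulas are equivalent when they have the same models. -/
def equiv [∀ v, DecidableEq (σ v)] (φ ψ : DForm V σ) : Prop :=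
  ∀ w : ∀ v, σ v, φ.eval w = ψ.eval w

/-- `φ ⊨ ψ`: every model of `φ` is a model of `ψ`. -/
def entails [∀ v, DecidableEq (σ v)] (φ ψ : DForm V σ) : Prop :=
  ∀ w : ∀ v, σ v, φ.eval w = true → ψ.eval w = true

/-- Conditioning `Δ|x_i`: replace occurrences of `x_i` by `⊤` and of `x_j` (`j ≠ i`) by `⊥`. -/
def cond [DecidableEq V] [∀ v, DecidableEq (σ v)] (v : V) (s : σ v) :
    DForm V σ → DForm V σ
  | top => top
  | bot => bot
  | state u t =>
      if h : u = v then (if h ▸ t = s then top else bot) else state u t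
  | neg φ => neg (φ.cond v s)
  | conj φ ψ => conj (φ.cond v s) (ψ.cond v s)
  | disj φ ψ => disj (φ.cond v s) (ψ.cond v s)

/-- Universal quantification of state `x_i`:
`∀x_i·Δ := (Δ|x_i) ∧ ⋀_{j≠i} (x_i ∨ Δ|x_j)`. -/
noncomputable def quant [DecidableEq V] [∀ v, DecidableEq (σ v)] [∀ v, Fintype (σ v)]
    (v : V) (s : σ v) (Δ : DForm V σ) : DForm V σ :=
  ((Finset.univ.filter (fun j => j ≠ s)).toList).foldr
    (fun j acc => conj (disj (state v s) (Δ.cond v j)) acc) (Δ.cond v s)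

/-- The set of variables occurring in a formula. -/
def vars : DForm V σ → Set V
  | top => ∅
  | bot => ∅
  | state u _ => {u}
  | neg φ => φ.vars
  | conj φ ψ => φ.vars ∪ ψ.vars
  | disj φ ψ => φ.vars ∪ ψ.vars

/-- Whether state `x_i` (the positive literal) occurs in the formula. -/
def stateOccurs (v : V) (s : σ v) : DForm V σ → Prop
  | top => False
  | bot => False
  | state u t => ∃ h : u = v, h ▸ t = s
  | neg φ => φ.stateOccurs v s
  | conj φ ψ => φ.stateOccurs v s ∨ ψ.stateOccurs v s
  | disj φ ψ => φ.stateOccurs v s ∨ ψ.stateOccurs v s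

/-- An NNF only negates states (literals). -/
def isNNF : DForm V σ → Prop
  | top => True
  | bot => True
  | state _ _ => True
  | neg (state _ _) => True
  | neg _ => False
  | conj φ ψ => φ.isNNF ∧ ψ.isNNF
  | disj φ ψ => φ.isNNF ∧ ψ.isNNF

/-- A positive NNF contains no negation at all. -/
def isPositive : DForm V σ → Prop
  | top => True
  | bot => True
  | state _ _ => True
  | neg _ => False
  | conj φ ψ => φ.isPositive ∧ ψ.isPositive
  | disj φ ψ => φ.isPositive ∧ ψ.isPositive

/-- A monotone NNF is positive and has at most one state per variable. -/
def monotone (Δ : DForm V σ) : Prop :=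
  Δ.isPositive ∧ ∀ (v : V) (s t : σ v), Δ.stateOccurs v s → Δ.stateOccurs v t → s = t

/-- ∨-decomposability: disjuncts of every disjunction share no variables. -/
def orDecomposable : DForm V σ → Prop
  | top => True
  | bot => True
  | state _ _ => True
  | neg φ => φ.orDecomposable
  | conj φ ψ => φ.orDecomposable ∧ ψ.orDecomposable
  | disj φ ψ => φ.vars ∩ ψ.vars = ∅ ∧ φ.orDecomposable ∧ ψ.orDecomposable

/-- ∧-decomposability: conjuncts of every conjunction share no variables. -/
def andDecomposable : DForm V σ → Prop
  | top => True
  | bot => True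
  | state _ _ => True
  | neg φ => φ.andDecomposable
  | conj φ ψ => φ.vars ∩ ψ.vars = ∅ ∧ φ.andDecomposable ∧ ψ.andDecomposable
  | disj φ ψ => φ.andDecomposable ∧ ψ.andDecomposable

end DForm

variable {V : Type} {σ : V → Type}

/-- For the state `s` of variable `v`: replace `¬x_i` by `⊥`, `x_j` (`j ≠ i`)
by `⊥` and `¬x_j` (`j ≠ i`) by `x_i` (where `x_i` denotes that state). -/
def replaceQ [DecidableEq V] [∀ v, DecidableEq (σ v)] (v : V) (s : σ v) :
    DForm V σ → DForm V σ
  | .top => .top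
  | .bot => .bot
  | .state u t =>
      if h : u = v then (if h ▸ t = s then .state u t else .bot) else .state u t
  | .neg (.state u t) =>
      if h : u = v then (if h ▸ t = s then .bot else .state v s) else .neg (.state u t)
  | .neg φ => .neg (replaceQ v s φ)
  | .conj φ ψ => .conj (replaceQ v s φ) (replaceQ v s ψ)
  | .disj φ ψ => .disj (replaceQ v s φ) (replaceQ v s ψ)

/-- Universally quantify a list of states, one after the other. -/
noncomputable def quantList [DecidableEq V] [∀ v, DecidableEq (σ v)] [∀ v, Fintype (σ v)] :
    List ((v : V) × σ v) → DForm V σ → DForm V σ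
  | [], Δ => Δ
  | p :: ps, Δ => quantList ps (DForm.quant p.1 p.2 Δ)

/-- Apply the replacement `replaceQ` for each state in the list. -/
def replaceList [DecidableEq V] [∀ v, DecidableEq (σ v)] :
    List ((v : V) × σ v) → DForm V σ → DForm V σ
  | [], Δ => Δ
  | p :: ps, Δ => replaceList ps (replaceQ p.1 p.2 Δ)


section Helpers

open DForm

variable {V : Type} {σ : V → Type} [DecidableEq V] [∀ v, DecidableEq (σ v)]

private lemma cast_triv {v : V} (h : v = v) (t : σ v) : h ▸ t = t := by
  cases h; rfl

/-- Conditioning is semantic substitution. -/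
lemma eval_cond (v : V) (t : σ v) (Δ : DForm V σ) (w : ∀ u, σ u) :
    (Δ.cond v t).eval w = Δ.eval (Function.update w v t) := by
  induction Δ with
  | top => rfl
  | bot => rfl
  | state u t' =>
      by_cases h : u = v
      · subst h
        simp only [DForm.cond, dif_pos rfl, cast_triv]
        by_cases h2 : t' = t
        · simp [h2, DForm.eval, Function.update_self]
        · simp [h2, DForm.eval, Function.update_self, Ne.symm h2]
      · simp [DForm.cond, h, DForm.eval, Function.update_of_ne h]
  | neg φ ih => simp [DForm.cond, DForm.eval, ih]
  | conj φ ψ ih1 ih2 => simp [DForm.cond, DForm.eval, ih1, ih2]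
  | disj φ ψ ih1 ih2 => simp [DForm.cond, DForm.eval, ih1, ih2]

lemma eval_update_of_not_mem {v : V} (Δ : DForm V σ) (h : v ∉ Δ.vars)
    (w : ∀ u, σ u) (j : σ v) : Δ.eval (Function.update w v j) = Δ.eval w := by
  induction Δ with
  | top => rfl
  | bot => rfl
  | state u t' =>
      have hu : u ≠ v := fun hu => h (by simp [DForm.vars, hu])
      simp [DForm.eval, Function.update_of_ne hu]
  | neg φ ih => simp [DForm.vars] at h; simp [DForm.eval, ih h]
  | conj φ ψ ih1 ih2 =>
      simp [DForm.vars] at h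
      simp [DForm.eval, ih1 h.1, ih2 h.2]
  | disj φ ψ ih1 ih2 =>
      simp [DForm.vars] at h
      simp [DForm.eval, ih1 h.1, ih2 h.2]

lemma vars_replaceQ (v : V) (s : σ v) (Δ : DForm V σ) :
    (replaceQ v s Δ).vars ⊆ Δ.vars := by
  induction Δ with
  | top => exact subset_rfl
  | bot => exact subset_rfl
  | state u t =>
      by_cases h : u = v
      · subst h
        simp only [replaceQ, dif_pos rfl, cast_triv]
        by_cases h2 : t = s <;> simp [h2, DForm.vars, Set.empty_subset]
      · simp [replaceQ, h]
  | neg φ ih =>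
      cases φ with
      | state u t =>
          by_cases h : u = v
          · subst h
            simp only [replaceQ, dif_pos rfl, cast_triv]
            by_cases h2 : t = s <;> simp [h2, DForm.vars, Set.empty_subset]
          · simp [replaceQ, h]
      | top => simpa [replaceQ, DForm.vars] using ih
      | bot => simpa [replaceQ, DForm.vars] using ih
      | neg φ' => simpa [replaceQ, DForm.vars] using ih
      | conj φ' ψ' => simpa [replaceQ, DForm.vars] using ih
      | disj φ' ψ' => simpa [replaceQ, DForm.vars] using ih
  | conj φ ψ ih1 ih2 =>
      simp only [replaceQ, DForm.vars]
      exact Set.union_subset_union ih1 ih2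
  | disj φ ψ ih1 ih2 =>
      simp only [replaceQ, DForm.vars]
      exact Set.union_subset_union ih1 ih2

lemma isNNF_replaceQ (v : V) (s : σ v) (Δ : DForm V σ) (h : Δ.isNNF) :
    (replaceQ v s Δ).isNNF := by
  induction Δ with
  | top => trivial
  | bot => trivial
  | state u t =>
      by_cases h1 : u = v
      · subst h1
        simp only [replaceQ, dif_pos rfl, cast_triv]
        by_cases h2 : t = s <;> simp [h2, DForm.isNNF]
      · simp [replaceQ, h1, DForm.isNNF]
  | neg φ ih =>
      cases φ with
      | state u t =>
          by_cases h1 : u = v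
          · subst h1
            simp only [replaceQ, dif_pos rfl, cast_triv]
            by_cases h2 : t = s <;> simp [h2, DForm.isNNF]
          · simp [replaceQ, h1, DForm.isNNF]
      | top => exact absurd h (by simp [DForm.isNNF])
      | bot => exact absurd h (by simp [DForm.isNNF])
      | neg φ' => exact absurd h (by simp [DForm.isNNF])
      | conj φ' ψ' => exact absurd h (by simp [DForm.isNNF])
      | disj φ' ψ' => exact absurd h (by simp [DForm.isNNF])
  | conj φ ψ ih1 ih2 => exact ⟨ih1 h.1, ih2 h.2⟩
  | disj φ ψ ih1 ih2 => exact ⟨ih1 h.1, ih2 h.2⟩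

lemma orDec_replaceQ (v : V) (s : σ v) (Δ : DForm V σ) (h : Δ.orDecomposable) :
    (replaceQ v s Δ).orDecomposable := by
  induction Δ with
  | top => trivial
  | bot => trivial
  | state u t =>
      by_cases h1 : u = v
      · subst h1
        simp only [replaceQ, dif_pos rfl, cast_triv]
        by_cases h2 : t = s <;> simp [h2, DForm.orDecomposable]
      · simp [replaceQ, h1, DForm.orDecomposable]
  | neg φ ih =>
      cases φ with
      | state u t =>
          by_cases h1 : u = v
          · subst h1
            simp only [replaceQ, dif_pos rfl, cast_triv]
            by_cases h2 : t = s <;> simp [h2, DForm.orDecomposable]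
          · simp [replaceQ, h1, DForm.orDecomposable]
      | top => exact ih h
      | bot => exact ih h
      | neg φ' => exact ih h
      | conj φ' ψ' => exact ih h
      | disj φ' ψ' => exact ih h
  | conj φ ψ ih1 ih2 => exact ⟨ih1 h.1, ih2 h.2⟩
  | disj φ ψ ih1 ih2 =>
      refine ⟨?_, ih1 h.2.1, ih2 h.2.2⟩
      have := Set.inter_subset_inter (vars_replaceQ v s φ) (vars_replaceQ v s ψ)
      rw [h.1] at this
      exact Set.subset_empty_iff.mp this

/-- At a world where `w v = s`, the replacement does not change evaluation. -/
lemma eval_replaceQ_of_eq {v : V} {s : σ v} (Δ : DForm V σ) (w : ∀ u, σ u)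
    (hw : w v = s) : (replaceQ v s Δ).eval w = Δ.eval w := by
  induction Δ with
  | top => rfl
  | bot => rfl
  | state u t =>
      by_cases h1 : u = v
      · subst h1
        simp only [replaceQ, dif_pos rfl, cast_triv]
        by_cases h2 : t = s
        · simp [h2, DForm.eval]
        · simp [h2, DForm.eval, hw, Ne.symm h2]
      · simp [replaceQ, h1]
  | neg φ ih =>
      cases φ with
      | state u t =>
          by_cases h1 : u = v
          · subst h1
            simp only [replaceQ, dif_pos rfl, cast_triv]
            by_cases h2 : t = s
            · simp [h2, DForm.eval, hw]
            · simp [h2, DForm.eval, hw, Ne.symm h2]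
          · simp [replaceQ, h1]
      | top => simp [replaceQ, DForm.eval]
      | bot => simp [replaceQ, DForm.eval]
      | neg φ' => simp only [replaceQ, DForm.eval] at ih ⊢; rw [ih]
      | conj φ' ψ' => simp only [replaceQ, DForm.eval] at ih ⊢; rw [ih]
      | disj φ' ψ' => simp only [replaceQ, DForm.eval] at ih ⊢; rw [ih]
  | conj φ ψ ih1 ih2 => simp [replaceQ, DForm.eval, ih1, ih2]
  | disj φ ψ ih1 ih2 => simp [replaceQ, DForm.eval, ih1, ih2]

/-- At a world where `w v ≠ s`, for an ∨-decomposable NNF, the replacement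
evaluates like the universal quantification. -/
lemma eval_replaceQ_of_ne {v : V} {s : σ v} (Δ : DForm V σ) (hnnf : Δ.isNNF)
    (hdec : Δ.orDecomposable) (w : ∀ u, σ u) (hw : w v ≠ s) :
    ((replaceQ v s Δ).eval w = true ↔ ∀ j, Δ.eval (Function.update w v j) = true) := by
  have hne : Nonempty (σ v) := ⟨w v⟩
  induction Δ with
  | top => simp [replaceQ, DForm.eval]
  | bot => simp [replaceQ, DForm.eval]
  | state u t =>
      by_cases h1 : u = v
      · subst h1
        simp only [replaceQ, dif_pos rfl, cast_triv]
        by_cases h2 : t = s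
        · subst h2
          simp only [if_pos rfl, DForm.eval, Function.update_self]
          constructor
          · intro h; exact absurd (of_decide_eq_true h) hw
          · intro h; exact absurd (of_decide_eq_true (h (w u))) (by simpa using hw)
        · simp only [if_neg h2, DForm.eval, Function.update_self]
          constructor
          · intro h; exact absurd h (by simp [DForm.eval])
          · intro h; exact absurd (of_decide_eq_true (h s)) (Ne.symm h2)
      · simp [replaceQ, h1, DForm.eval, Function.update_of_ne h1]
  | neg φ ih =>
      cases φ with
      | state u t =>
          by_cases h1 : u = v
          · subst h1
            simp only [replaceQ, dif_pos rfl, cast_triv]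
            by_cases h2 : t = s
            · subst h2
              simp only [if_pos rfl, DForm.eval, Function.update_self]
              constructor
              · intro h; exact absurd h (by simp [DForm.eval])
              · intro h; simpa using h t
            · simp only [if_neg h2, DForm.eval, Function.update_self]
              constructor
              · intro h; exact absurd (of_decide_eq_true h) hw
              · intro h; simpa using h t
          · simp [replaceQ, h1, DForm.eval, Function.update_of_ne h1]
      | top => exact absurd hnnf (by simp [DForm.isNNF])
      | bot => exact absurd hnnf (by simp [DForm.isNNF])
      | neg φ' => exact absurd hnnf (by simp [DForm.isNNF])
      | conj φ' ψ' => exact absurd hnnf (by simp [DForm.isNNF])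
      | disj φ' ψ' => exact absurd hnnf (by simp [DForm.isNNF])
  | conj φ ψ ih1 ih2 =>
      simp only [replaceQ, DForm.eval, Bool.and_eq_true]
      obtain ⟨hn1, hn2⟩ := hnnf
      obtain ⟨hd1, hd2⟩ := hdec
      have H1 := ih1 hn1 hd1
      have H2 := ih2 hn2 hd2
      refine Iff.trans (and_congr H1 H2) ?_
      constructor
      · rintro ⟨h1, h2⟩ j; exact ⟨h1 j, h2 j⟩
      · intro h; exact ⟨fun j => (h j).1, fun j => (h j).2⟩
  | disj φ ψ ih1 ih2 =>
      simp only [replaceQ, DForm.eval, Bool.or_eq_true]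
      obtain ⟨hn1, hn2⟩ := hnnf
      obtain ⟨hd0, hd1, hd2⟩ := hdec
      have H1 := ih1 hn1 hd1
      have H2 := ih2 hn2 hd2
      refine Iff.trans (or_congr H1 H2) ?_
      have hv : v ∉ φ.vars ∨ v ∉ ψ.vars := by
        by_cases hφ : v ∈ φ.vars
        · right; intro hψ
          have : v ∈ φ.vars ∩ ψ.vars := ⟨hφ, hψ⟩
          rw [hd0] at this; exact this
        · left; exact hφ
      rcases hv with hv | hv
      · constructor
        · rintro (h | h) j
          · left; simp only [eval_update_of_not_mem φ hv]
            simp only [eval_update_of_not_mem φ hv] at h; exact h (w v)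
          · right; exact h j
        · intro h
          by_cases hφ : φ.eval w = true
          · left; intro j; simp only [eval_update_of_not_mem φ hv]; exact hφ
          · right; intro j
            rcases h j with h' | h'
            · simp only [eval_update_of_not_mem φ hv] at h'; exact absurd h' hφ
            · exact h'
      · constructor
        · rintro (h | h) j
          · left; exact h j
          · right; simp only [eval_update_of_not_mem ψ hv]
            simp only [eval_update_of_not_mem ψ hv] at h; exact h (w v)
        · intro h
          by_cases hψ : ψ.eval w = true
          · right; intro j; simp only [eval_update_of_not_mem ψ hv]; exact hψ
          · left; intro j
            rcases h j with h' | h'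
            · exact h'
            · simp only [eval_update_of_not_mem ψ hv] at h'; exact absurd h' hψ

lemma eval_foldr (v : V) (s : σ v) (Δ base : DForm V σ) (w : ∀ u, σ u)
    (L : List (σ v)) :
    ((L.foldr (fun j acc => DForm.conj (DForm.disj (DForm.state v s) (Δ.cond v j)) acc)
        base).eval w)
      = ((L.all fun j => decide (w v = s) || (Δ.cond v j).eval w) && base.eval w) := by
  induction L with
  | nil => simp
  | cons j L ih =>
      simp [DForm.eval, ih, Bool.and_assoc]

variable [∀ v, Fintype (σ v)]

lemma eval_quant (v : V) (s : σ v) (Δ : DForm V σ) (w : ∀ u, σ u) :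
    ((Δ.quant v s).eval w = true ↔
      (Δ.eval (Function.update w v s) = true ∧
        ∀ j, j ≠ s → w v = s ∨ Δ.eval (Function.update w v j) = true)) := by
  rw [DForm.quant, eval_foldr]
  simp only [Bool.and_eq_true, List.all_eq_true, Finset.mem_toList, Finset.mem_filter,
    Finset.mem_univ, true_and, Bool.or_eq_true, decide_eq_true_eq, eval_cond]
  tauto

/-- Single-step: quantification is equivalent to the replacement. -/
lemma quant_equiv_replaceQ (v : V) (s : σ v) (Δ : DForm V σ) (hnnf : Δ.isNNF)
    (hdec : Δ.orDecomposable) : equiv (Δ.quant v s) (replaceQ v s Δ) := by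
  intro w
  rw [Bool.eq_iff_iff, eval_quant]
  by_cases hw : w v = s
  · rw [eval_replaceQ_of_eq Δ w hw]
    have hupd : Function.update w v s = w := by
      rw [← hw]; exact Function.update_eq_self v w
    rw [hupd]
    constructor
    · intro h; exact h.1
    · intro h; exact ⟨h, fun j _ => Or.inl hw⟩
  · rw [eval_replaceQ_of_ne Δ hnnf hdec w hw]
    constructor
    · rintro ⟨h1, h2⟩ j
      by_cases hj : j = s
      · subst hj; exact h1
      · rcases h2 j hj with h | h
        · exact absurd h hw
        · exact h
    · intro h; exact ⟨h s, fun j _ => Or.inr (h j)⟩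

lemma quant_congr (v : V) (s : σ v) {Δ Δ' : DForm V σ} (h : equiv Δ Δ') :
    equiv (Δ.quant v s) (Δ'.quant v s) := by
  intro w
  rw [DForm.quant, DForm.quant, eval_foldr, eval_foldr]
  have hc : ∀ (j : σ v) (w' : ∀ u, σ u), (Δ.cond v j).eval w' = (Δ'.cond v j).eval w' := by
    intro j w'; rw [eval_cond, eval_cond, h]
  simp only [hc]

lemma quantList_congr (L : List ((v : V) × σ v)) {Δ Δ' : DForm V σ}
    (h : equiv Δ Δ') : equiv (quantList L Δ) (quantList L Δ') := by
  induction L generalizing Δ Δ' with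
  | nil => exact h
  | cons p ps ih => exact ih (quant_congr p.1 p.2 h)

end Helpers

open DForm in
/-- Universally quantifying a set of states (at most one per variable) from an
∨-decomposable NNF amounts to the literal replacement `replaceQ`, and the
result is again ∨-decomposable. -/
theorem quant_orDecomposable [DecidableEq V] [∀ v, DecidableEq (σ v)] [∀ v, Fintype (σ v)]
    (Δ : DForm V σ) (hnnf : Δ.isNNF) (hdec : Δ.orDecomposable)
    (γ : List ((v : V) × σ v)) (hγ : γ.Pairwise (fun p q => p.1 ≠ q.1)) :
    equiv (quantList γ Δ) (replaceList γ Δ) ∧ (replaceList γ Δ).orDecomposable := by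
  induction γ generalizing Δ with
  | nil => exact ⟨fun w => rfl, hdec⟩
  | cons p ps ih =>
      have hn := isNNF_replaceQ p.1 p.2 Δ hnnf
      have hd := orDec_replaceQ p.1 p.2 Δ hdec
      obtain ⟨e, d⟩ := ih (replaceQ p.1 p.2 Δ) hn hd (List.pairwise_cons.mp hγ).2
      refine ⟨?_, d⟩
      intro w
      have h1 := quantList_congr ps (quant_equiv_replaceQ p.1 p.2 Δ hnnf hdec) w
      calc (quantList (p :: ps) Δ).eval w
          = (quantList ps (DForm.quant p.1 p.2 Δ)).eval w := rfl
        _ = (quantList ps (replaceQ p.1 p.2 Δ)).eval w := h1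
        _ = (replaceList ps (replaceQ p.1 p.2 Δ)).eval w := e w
        _ = (replaceList (p :: ps) Δ).eval w := rfl
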